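/- Let S = {(a,b) ∈ ℝ² | 0 ≤ a and exp(a) ≤ b}. Then for every d ∈ ℕ, the truncated exponential polynomial p_d = ∑_{i=0}^d x₁^i/i! satisfies p_d ∈ B₁(S); in particular 0 ≤ p_d(a,b) ≤ b for all (a,b) ∈ S. Consequently B₁(S) is an infinite-dimensional real vector space. -/

import Mathlib

open MvPolynomial

def Bset (n d : ℕ) (S : Set (Fin n → ℝ)) : Set (MvPolynomial (Fin n) ℝ) :=
  {p | ∃ q : MvPolynomial (Fin n) ℝ, q.totalDegree ≤ 2 * d ∧ ∀ a ∈ S, (eval a p) ^ 2 ≤ eval a q}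

/-- The region above the exponential graph. -/
def Sexp : Set (Fin 2 → ℝ) := {a | 0 ≤ a 0 ∧ Real.exp (a 0) ≤ a 1}

/-- Truncated exponential polynomial `∑_{i=0}^d x₁^i / i!`. -/
noncomputable def pexp (d : ℕ) : MvPolynomial (Fin 2) ℝ :=
  ∑ i ∈ Finset.range (d + 1), C ((1 : ℝ) / (Nat.factorial i)) * X 0 ^ i

lemma eval_pexp (d : ℕ) (a : Fin 2 → ℝ) :
    eval a (pexp d) = ∑ i ∈ Finset.range (d + 1), (a 0) ^ i / (Nat.factorial i) := by
  simp [pexp, div_eq_mul_inv, mul_comm]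

lemma pexp_bounds (d : ℕ) (a : Fin 2 → ℝ) (ha : a ∈ Sexp) :
    0 ≤ eval a (pexp d) ∧ eval a (pexp d) ≤ a 1 := by
  obtain ⟨h0, h1⟩ := ha
  rw [eval_pexp]
  constructor
  · apply Finset.sum_nonneg
    intro i _
    positivity
  · exact le_trans (Real.sum_le_exp_of_nonneg h0 (d + 1)) h1

lemma pexp_mem (d : ℕ) : pexp d ∈ Bset 2 1 Sexp := by
  refine ⟨X 1 ^ 2, ?_, ?_⟩
  · calc (X (1 : Fin 2) ^ 2 : MvPolynomial (Fin 2) ℝ).totalDegree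
        ≤ 2 * (X (1 : Fin 2) : MvPolynomial (Fin 2) ℝ).totalDegree := totalDegree_pow _ _
      _ ≤ 2 * 1 := by rw [totalDegree_X]
  · intro a ha
    obtain ⟨hp0, hp1⟩ := pexp_bounds d a ha
    simp only [eval_pow, eval_X]
    exact pow_le_pow_left₀ hp0 hp1 2

lemma X_pow_mem_span (d : ℕ) :
    (X 0 : MvPolynomial (Fin 2) ℝ) ^ d ∈ Submodule.span ℝ (Bset 2 1 Sexp) := by
  induction d with
  | zero =>
      have : (X (0 : Fin 2) : MvPolynomial (Fin 2) ℝ) ^ 0 = pexp 0 := by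
        simp [pexp]
      rw [this]
      exact Submodule.subset_span (pexp_mem 0)
  | succ n ih =>
      have key : (X 0 : MvPolynomial (Fin 2) ℝ) ^ (n + 1)
          = ((Nat.factorial (n + 1) : ℝ)) • (pexp (n + 1) - pexp n) := by
        have : pexp (n + 1) - pexp n
            = C ((1 : ℝ) / (Nat.factorial (n + 1))) * X 0 ^ (n + 1) := by
          rw [pexp, Finset.sum_range_succ, pexp]; ring
        rw [this, smul_eq_C_mul, ← mul_assoc, ← C_mul,
          mul_one_div, div_self (by positivity), C_1, one_mul]
      rw [key]
      exact Submodule.smul_mem _ _ (Submodule.sub_mem _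
        (Submodule.subset_span (pexp_mem (n + 1)))
        (Submodule.subset_span (pexp_mem n)))

lemma X_pow_linearIndependent :
    LinearIndependent ℝ (fun d : ℕ => (X 0 : MvPolynomial (Fin 2) ℝ) ^ d) := by
  have h := (MvPolynomial.basisMonomials (Fin 2) ℝ).linearIndependent
  have h2 := h.comp (fun d : ℕ => Finsupp.single (0 : Fin 2) d)
    (fun a b hab => by
      have := congrArg (fun f => f 0) hab
      simpa using this)
  rw [coe_basisMonomials] at h2
  convert h2 using 1
  funext d
  simp [X_pow_eq_monomial]
  all_goals rfl

theorem truncated_exp_in_B1 :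
    (∀ d : ℕ, pexp d ∈ Bset 2 1 Sexp) ∧
    (∀ d : ℕ, ∀ a ∈ Sexp, 0 ≤ eval a (pexp d) ∧ eval a (pexp d) ≤ a 1) ∧
    ¬ Module.Finite ℝ (Submodule.span ℝ (Bset 2 1 Sexp)) := by
  refine ⟨pexp_mem, fun d a ha => pexp_bounds d a ha, ?_⟩
  intro hfin
  set M := Submodule.span ℝ (Bset 2 1 Sexp)
  have hv : LinearIndependent ℝ (fun d : ℕ =>
      (⟨(X 0 : MvPolynomial (Fin 2) ℝ) ^ d, X_pow_mem_span d⟩ : M)) := by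
    apply LinearIndependent.of_comp M.subtype
    exact X_pow_linearIndependent
  exact Module.Finite.not_linearIndependent_of_infinite (R := ℝ) (M := M) _ hv
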